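/- For all p, q ∈ ℕ, the Clifford twist satisfies the closed-form formula ε(p,q) = μ^{β(p AND q)} · (-1)^{N(p,q)}, where β denotes popcount, AND is bitwise and, and N(p,q) is the number of pairs (i,j) with i > j such that bit i of p and bit j of q are both set. -/

import Mathlib

/-- Number of 1-bits (popcount) of a natural number. -/
def popCount : ℕ → ℕ
  | 0 => 0
  | (n+1) => (n+1) % 2 + popCount ((n+1) / 2)
decreasing_by omega

/-- The Clifford twist with parameter `μ`. -/
def cliffordTwist (μ : ℤ) (p q : ℕ) : ℤ :=
  if p = 0 ∧ q = 0 then 1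
  else
    (if q % 2 = 1 then
      (if p % 2 = 1 then μ else 1) * (-1) ^ popCount (p / 2)
     else 1) * cliffordTwist μ (p / 2) (q / 2)
termination_by p + q
decreasing_by omega

open Finset

lemma popCount_def (p : ℕ) : popCount p = p % 2 + popCount (p / 2) := by
  cases p with
  | zero => simp [popCount]
  | succ n => rw [popCount]

lemma testBit_lt {p i m : ℕ} (h : p.testBit i = true) (hm : p < 2 ^ m) : i < m := by
  by_contra hc
  have : p < 2 ^ i := lt_of_lt_of_le hm (Nat.pow_le_pow_right (by norm_num) (by omega))
  simp [Nat.testBit_lt_two_pow this] at h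

lemma popCount_card {m p : ℕ} (hp : p < 2 ^ m) :
    popCount p = ((range m).filter (fun i => p.testBit i = true)).card := by
  induction m generalizing p with
  | zero => interval_cases p; simp [popCount]
  | succ m ih =>
    have h2 : p / 2 < 2 ^ m := by omega
    rw [popCount_def, ih h2, Finset.card_filter, Finset.card_filter,
      Finset.sum_range_succ']
    simp only [Nat.testBit_succ, Nat.testBit_zero]
    rcases Nat.even_or_odd p with h | h
    · simp [Nat.even_iff.mp h]
    · simp [Nat.odd_iff.mp h]
      omega

/-- canonical count -/
def Ncnt (p q : ℕ) : ℕ :=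
  (((Finset.range (p+1)) ×ˢ (Finset.range (q+1))).filter
    (fun ij => ij.2 < ij.1 ∧ p.testBit ij.1 ∧ q.testBit ij.2)).card

lemma Ncnt_eq {m n : ℕ} (p q : ℕ) (hm : p < 2 ^ m) (hn : q < 2 ^ n) :
    (((Finset.range m) ×ˢ (Finset.range n)).filter
      (fun ij => ij.2 < ij.1 ∧ p.testBit ij.1 ∧ q.testBit ij.2)).card = Ncnt p q := by
  unfold Ncnt
  congr 1
  apply Finset.ext
  rintro ⟨i, j⟩
  simp only [Finset.mem_filter, Finset.mem_product, Finset.mem_range]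
  constructor
  · rintro ⟨⟨hi, hj⟩, h1, h2, h3⟩
    have hp1 : p < 2 ^ (p+1) := lt_of_lt_of_le (Nat.lt_two_pow_self (n := p)) (Nat.pow_le_pow_right (by norm_num) (by omega))
    have hq1 : q < 2 ^ (q+1) := lt_of_lt_of_le (Nat.lt_two_pow_self (n := q)) (Nat.pow_le_pow_right (by norm_num) (by omega))
    exact ⟨⟨testBit_lt h2 hp1, testBit_lt h3 hq1⟩, h1, h2, h3⟩
  · rintro ⟨⟨hi, hj⟩, h1, h2, h3⟩
    exact ⟨⟨testBit_lt h2 hm, testBit_lt h3 hn⟩, h1, h2, h3⟩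

lemma Ncnt_rec (p q : ℕ) :
    Ncnt p q = q % 2 * popCount (p / 2) + Ncnt (p / 2) (q / 2) := by
  unfold Ncnt
  rw [Finset.card_filter, Finset.sum_product, Finset.sum_range_succ']
  have h0 : ∀ j ∈ range (q+1), (if j < (0:ℕ) ∧ p.testBit 0 ∧ q.testBit j then (1:ℕ) else 0) = 0 := by
    intro j _; simp
  rw [Finset.sum_congr rfl h0, Finset.sum_const, smul_zero, add_zero]
  have h1 : ∀ i ∈ range p,
      (∑ j ∈ range (q+1), if j < i+1 ∧ p.testBit (i+1) ∧ q.testBit j then (1:ℕ) else 0)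
      = (if (p/2).testBit i ∧ q.testBit 0 then 1 else 0)
        + ∑ j ∈ range q, (if j < i ∧ (p/2).testBit i ∧ (q/2).testBit j then (1:ℕ) else 0) := by
    intro i _
    rw [Finset.sum_range_succ']
    rw [add_comm]
    congr 1
    · have e1 : p.testBit (i+1) = (p/2).testBit i := Nat.testBit_succ p i
      simp [e1]
    · apply Finset.sum_congr rfl
      intro j _
      have e1 : p.testBit (i+1) = (p/2).testBit i := Nat.testBit_succ p i
      have e2 : q.testBit (j+1) = (q/2).testBit j := Nat.testBit_succ q j
      rw [e1, e2]
      simp only [Nat.add_lt_add_iff_right]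
  rw [Finset.sum_congr rfl h1, Finset.sum_add_distrib]
  congr 1
  · rcases Nat.even_or_odd q with h | h
    · have : q.testBit 0 = false := by simp [Nat.even_iff.mp h]
      simp [this, Nat.even_iff.mp h]
    · have hb : q.testBit 0 = true := by simp [Nat.odd_iff.mp h]
      have hp2 : p / 2 < 2 ^ p := by
        calc p / 2 ≤ p := Nat.div_le_self p 2
        _ < 2 ^ p := (Nat.lt_two_pow_self (n := p))
      rw [Nat.odd_iff.mp h, one_mul, popCount_card hp2, Finset.card_filter]
      simp [hb]
  · rw [← Finset.sum_product' (f := fun i j => if j < i ∧ (p/2).testBit i ∧ (q/2).testBit j then (1:ℕ) else 0)]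
    rw [← Finset.card_filter]
    have hp2 : p / 2 < 2 ^ p := lt_of_le_of_lt (Nat.div_le_self p 2) (Nat.lt_two_pow_self (n := p))
    have hq2 : q / 2 < 2 ^ q := lt_of_le_of_lt (Nat.div_le_self q 2) (Nat.lt_two_pow_self (n := q))
    exact Ncnt_eq (p/2) (q/2) hp2 hq2

lemma Ncnt_zero : Ncnt 0 0 = 0 := by
  simp [Ncnt]

lemma and_popCount (p q : ℕ) :
    popCount (p &&& q) = p % 2 * (q % 2) + popCount (p / 2 &&& q / 2) := by
  rw [popCount_def, ← Nat.and_div_two]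
  congr 1
  have h2 : (p &&& q) % 2 = 1 ↔ p % 2 = 1 ∧ q % 2 = 1 := Nat.and_mod_two_eq_one
  have h3 : (p &&& q) % 2 < 2 := Nat.mod_lt _ (by norm_num)
  rcases Nat.mod_two_eq_zero_or_one p with h | h <;>
    rcases Nat.mod_two_eq_zero_or_one q with h' | h' <;> rw [h, h'] <;> omega

lemma main_aux (μ : ℤ) : ∀ n p q, p + q ≤ n →
    cliffordTwist μ p q = μ ^ popCount (p &&& q) * (-1) ^ Ncnt p q := by
  intro n
  induction n with
  | zero =>
    intro p q h
    have hp : p = 0 := by omega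
    have hq : q = 0 := by omega
    subst hp; subst hq
    rw [cliffordTwist]
    simp [Ncnt_zero, popCount]
  | succ n ih =>
    intro p q h
    by_cases h0 : p = 0 ∧ q = 0
    · obtain ⟨hp, hq⟩ := h0; subst hp; subst hq
      rw [cliffordTwist]
      simp [Ncnt_zero, popCount]
    · rw [cliffordTwist, if_neg h0, ih (p/2) (q/2) (by omega), Ncnt_rec p q,
        and_popCount p q, pow_add, pow_add]
      rcases Nat.mod_two_eq_zero_or_one p with hp | hp <;>
        rcases Nat.mod_two_eq_zero_or_one q with hq | hq <;>
        simp [hp, hq] <;> ring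

theorem stmt3 (μ : ℤ) (hμ : μ = 1 ∨ μ = -1) (p q : ℕ) :
    cliffordTwist μ p q =
      μ ^ popCount (p &&& q) *
        (-1) ^ (((Finset.range (p+1)) ×ˢ (Finset.range (q+1))).filter
          (fun ij => ij.2 < ij.1 ∧ p.testBit ij.1 ∧ q.testBit ij.2)).card := by
  exact main_aux μ (p + q) p q le_rfl
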